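/- arXiv:2402.11787 — 2 statements merged into one kernel-verified Lean document; each statement's English description precedes it below -/
import Mathlib

section
/- Let -1 ≤ β < α < 1 with β < 0, and set μ = (1-β)/(α-β). Let G be the associated α-graph of a spherical {α,β}-code, with adjacency matrix A_G. Then the independence number t of G satisfies t ≤ μ·(jᵀNj) ≤ (1-β)/(-β) for any {1}-inverse N of A_G + μI. -/
open Matrix

noncomputable section

/-- The real inner product on `ℝ^d`. -/
def rinner {d : ℕ} (x y : EuclideanSpace ℝ (Fin d)) : ℝ := inner ℝ x y

lemma rinner_comm {d : ℕ} (x y : EuclideanSpace ℝ (Fin d)) : rinner x y = rinner y x :=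
  real_inner_comm y x

/-- A spherical `{α, β}`-code in `ℝ^d`: a family of unit vectors whose pairwise inner
products of distinct vectors lie in `{α, β}`. -/
def IsSphericalCode (α β : ℝ) {d n : ℕ} (u : Fin n → EuclideanSpace ℝ (Fin d)) : Prop :=
  (∀ i, ‖u i‖ = 1) ∧ ∀ i j, i ≠ j → rinner (u i) (u j) = α ∨ rinner (u i) (u j) = β

/-- Adjacency matrix of the associated `α`-graph `Γ_α(S)`. -/
def alphaAdj (α : ℝ) {d n : ℕ} (u : Fin n → EuclideanSpace ℝ (Fin d)) :
    Matrix (Fin n) (Fin n) ℝ :=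
  Matrix.of fun i j => if i ≠ j ∧ rinner (u i) (u j) = α then 1 else 0

/-- The associated `α`-graph `Γ_α(S)` of a family of vectors: distinct vectors are
adjacent iff their inner product is `α`. -/
def alphaGraph (α : ℝ) {d n : ℕ} (u : Fin n → EuclideanSpace ℝ (Fin d)) :
    SimpleGraph (Fin n) where
  Adj i j := i ≠ j ∧ rinner (u i) (u j) = α
  symm := ⟨fun i j h => ⟨h.1.symm, by rw [rinner_comm]; exact h.2⟩⟩
  loopless := ⟨fun i h => h.1 rfl⟩

lemma symm_mem_range {n : ℕ} (M : Matrix (Fin n) (Fin n) ℝ) (hsym : Mᵀ = M)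
    (y : Fin n → ℝ) (hy : ∀ v : Fin n → ℝ, M *ᵥ v = 0 → y ⬝ᵥ v = 0) :
    ∃ w : Fin n → ℝ, M *ᵥ w = y := by
  classical
  set T := Matrix.toEuclideanLin M with hT
  have hinner : ∀ a b : EuclideanSpace ℝ (Fin n),
      (inner ℝ a b : ℝ) = (WithLp.equiv 2 (Fin n → ℝ) a) ⬝ᵥ (WithLp.equiv 2 (Fin n → ℝ) b) := by
    intro a b
    rw [EuclideanSpace.inner_eq_star_dotProduct]
    rw [dotProduct_comm]; rfl
  have hker : ∀ v : EuclideanSpace ℝ (Fin n), v ∈ LinearMap.ker T →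
      M *ᵥ (WithLp.equiv 2 (Fin n → ℝ) v) = 0 := by
    intro v hv
    have h0 := LinearMap.mem_ker.mp hv
    have := congrArg (WithLp.equiv 2 (Fin n → ℝ)) h0
    simpa [hT, Matrix.toEuclideanLin_apply] using this
  have hrange : LinearMap.range T = (LinearMap.ker T)ᗮ := by
    apply Submodule.eq_of_le_of_finrank_eq
    · rintro x ⟨w, rfl⟩
      rw [Submodule.mem_orthogonal']
      intro v hv
      rw [hinner]
      have hTw : (WithLp.equiv 2 (Fin n → ℝ)) (T w) = M *ᵥ (WithLp.equiv 2 (Fin n → ℝ) w) := rfl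
      rw [hTw, dotProduct_comm, dotProduct_mulVec, ← mulVec_transpose, hsym, hker v hv,
        zero_dotProduct]
    · have h1 := LinearMap.finrank_range_add_finrank_ker T
      have h2 := Submodule.finrank_add_finrank_orthogonal (K := LinearMap.ker T)
      rw [finrank_euclideanSpace_fin] at h1 h2
      omega
  have hy' : (WithLp.equiv 2 (Fin n → ℝ)).symm y ∈ (LinearMap.ker T)ᗮ := by
    rw [Submodule.mem_orthogonal']
    intro v hv
    rw [hinner]
    simpa using hy _ (hker v hv)
  rw [← hrange] at hy'
  obtain ⟨w, hw⟩ := hy'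
  refine ⟨WithLp.equiv 2 (Fin n → ℝ) w, ?_⟩
  have := congrArg (WithLp.equiv 2 (Fin n → ℝ)) hw
  simpa [hT, Matrix.toEuclideanLin_apply] using this


/-- the independence number `t` of the `α`-graph `G` of a spherical
`{α,β}`-code (i.e. the clique number of the complement of `G`) satisfies
`t ≤ μ·jᵀNj ≤ (1-β)/(-β)` for any `{1}`-inverse `N` of `A_G + μI`. -/
theorem stmt4 (d n : ℕ)
    (α β μ : ℝ) (hβ₁ : -1 ≤ β) (hβα : β < α) (hα : α < 1) (hβ₀ : β < 0)
    (hμ : μ = (1 - β) / (α - β))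
    (u : Fin n → EuclideanSpace ℝ (Fin d)) (hu : IsSphericalCode α β u)
    (t : ℕ) (ht : t = ((alphaGraph α u)ᶜ).cliqueNum)
    (N : Matrix (Fin n) (Fin n) ℝ)
    (hN : (alphaAdj α u + μ • (1 : Matrix (Fin n) (Fin n) ℝ)) * N *
        (alphaAdj α u + μ • 1) = alphaAdj α u + μ • 1) :
    (t : ℝ) ≤ μ * ((fun _ => (1 : ℝ)) ⬝ᵥ (N *ᵥ fun _ => 1)) ∧
    μ * ((fun _ => (1 : ℝ)) ⬝ᵥ (N *ᵥ fun _ => 1)) ≤ (1 - β) / (-β) := by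
  classical
  set M : Matrix (Fin n) (Fin n) ℝ := alphaAdj α u + μ • 1 with hM
  have hab : (0:ℝ) < α - β := sub_pos.2 hβα
  have h1β : (0:ℝ) < 1 - β := by linarith
  have hμpos : 0 < μ := by rw [hμ]; exact div_pos h1β hab
  -- entrywise identity
  have hMent : ∀ i j, (α - β) * M i j = rinner (u i) (u j) - β := by
    intro i j
    by_cases hij : i = j
    · subst hij
      have h11 : rinner (u i) (u i) = 1 := by
        have := hu.1 i
        rw [rinner, real_inner_self_eq_norm_sq (x := u i), this]; norm_num
      simp only [hM, Matrix.add_apply, Matrix.smul_apply, Matrix.one_apply_eq, alphaAdj,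
        Matrix.of_apply, ne_eq, not_true_eq_false, false_and, if_false, smul_eq_mul, mul_one,
        zero_add, h11]
      rw [hμ]
      field_simp
    · rcases hu.2 i j hij with h | h
      · have hMij : M i j = 1 := by
          simp [hM, alphaAdj, Matrix.add_apply, Matrix.smul_apply, Matrix.one_apply_ne hij,
            hij, h]
        rw [hMij, mul_one, h]
      · have hne : rinner (u i) (u j) ≠ α := by rw [h]; exact ne_of_lt hβα
        have hMij : M i j = 0 := by
          simp [hM, alphaAdj, Matrix.add_apply, Matrix.smul_apply, Matrix.one_apply_ne hij, hne]
        rw [hMij, mul_zero, h, sub_self]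
  have hsym : Mᵀ = M := by
    ext i j
    have h1 := hMent i j
    have h2 := hMent j i
    rw [rinner_comm] at h2
    have : (α - β) * Mᵀ i j = (α - β) * M i j := by
      rw [Matrix.transpose_apply, h2, h1]
    exact mul_left_cancel₀ (ne_of_gt hab) this
  -- bilinear identity
  have hbil : ∀ v w : Fin n → ℝ, (α - β) * (v ⬝ᵥ (M *ᵥ w)) =
      rinner (∑ i, v i • u i) (∑ i, w i • u i) + (-β) * ((∑ i, v i) * (∑ i, w i)) := by
    intro v w
    have h1 : rinner (∑ i, v i • u i) (∑ i, w i • u i)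
        = ∑ i, ∑ j, v i * w j * rinner (u i) (u j) := by
      rw [rinner]
      rw [sum_inner]
      refine Finset.sum_congr rfl fun i _ => ?_
      rw [inner_sum]
      refine Finset.sum_congr rfl fun j _ => ?_
      rw [real_inner_smul_left, real_inner_smul_right, rinner]
      ring
    have h2 : (α - β) * (v ⬝ᵥ (M *ᵥ w)) = ∑ i, ∑ j, v i * w j * ((α - β) * M i j) := by
      simp only [dotProduct, mulVec, dotProduct, Finset.mul_sum]
      refine Finset.sum_congr rfl fun i _ => Finset.sum_congr rfl fun j _ => by ring
    rw [h2, h1, Finset.sum_mul_sum]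
    rw [Finset.mul_sum, ← Finset.sum_add_distrib]
    refine Finset.sum_congr rfl fun i _ => ?_
    rw [Finset.mul_sum, ← Finset.sum_add_distrib]
    refine Finset.sum_congr rfl fun j _ => ?_
    rw [hMent]
    ring
  -- nonnegativity of the form
  have hq : ∀ v : Fin n → ℝ, 0 ≤ v ⬝ᵥ (M *ᵥ v) := by
    intro v
    have h := hbil v v
    have hz : 0 ≤ rinner (∑ i, v i • u i) (∑ i, v i • u i) := by
      unfold rinner; exact real_inner_self_nonneg
    nlinarith [sq_nonneg (∑ i, v i)]
  -- j is in the range of M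
  obtain ⟨w, hw⟩ : ∃ w : Fin n → ℝ, M *ᵥ w = (fun _ => (1:ℝ)) := by
    apply symm_mem_range M hsym
    intro v hv
    have h := hbil v v
    rw [hv, dotProduct_zero, mul_zero] at h
    have hz : 0 ≤ rinner (∑ i, v i • u i) (∑ i, v i • u i) := by
      unfold rinner; exact real_inner_self_nonneg
    have hs2 : (∑ i, v i) ^ 2 = 0 := by nlinarith
    have hs0 : (∑ i, v i) = 0 := by
      exact sq_eq_zero_iff.mp hs2
    simpa [dotProduct] using hs0
  have hMdot : ∀ x y : Fin n → ℝ, x ⬝ᵥ (M *ᵥ y) = (M *ᵥ x) ⬝ᵥ y := by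
    intro x y
    rw [dotProduct_mulVec, ← mulVec_transpose, hsym]
  set j : Fin n → ℝ := fun _ => 1 with hj
  have hs : j ⬝ᵥ (N *ᵥ j) = j ⬝ᵥ w := by
    conv_lhs => rw [← hw]
    rw [← hMdot, mulVec_mulVec, mulVec_mulVec, hN, hw]
    exact dotProduct_comm _ _
  set s : ℝ := j ⬝ᵥ w with hsdef
  clear_value s
  have hqw : w ⬝ᵥ (M *ᵥ w) = s := by rw [hw, dotProduct_comm, ← hsdef]
  have hsumw : (∑ i, w i) = s := by simp [hsdef, hj, dotProduct]
  have hkey := hbil w w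
  rw [hqw, hsumw] at hkey
  have hz : 0 ≤ rinner (∑ i, w i • u i) (∑ i, w i • u i) := by
    unfold rinner; exact real_inner_self_nonneg
  have key2 : (-β) * s ^ 2 ≤ (α - β) * s := by nlinarith
  have hs0 : 0 ≤ s := by nlinarith [sq_nonneg s]
  constructor
  · -- lower bound
    obtain ⟨S, hS⟩ := SimpleGraph.exists_isNClique_cliqueNum (G := (alphaGraph α u)ᶜ)
    have hcard : (S.card : ℝ) = (t : ℝ) := by rw [hS.card_eq, ht]
    set x : Fin n → ℝ := fun i => if i ∈ S then 1 else 0 with hx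
    have hxj : x ⬝ᵥ j = (t : ℝ) := by
      rw [← hcard]
      simp [hx, hj, dotProduct, Finset.sum_boole, Finset.filter_mem_eq_inter]
    have hM0 : ∀ i ∈ S, ∀ k ∈ S, M i k = if i = k then μ else 0 := by
      intro i hi k hk
      by_cases hik : i = k
      · subst hik
        simp [hM, alphaAdj, Matrix.add_apply, Matrix.smul_apply, Matrix.one_apply]
      · have hadj : ((alphaGraph α u)ᶜ).Adj i k := hS.isClique hi hk hik
        rw [SimpleGraph.compl_adj] at hadj
        have hna : ¬ (i ≠ k ∧ rinner (u i) (u k) = α) := hadj.2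
        have hne : rinner (u i) (u k) ≠ α := fun hc => hna ⟨hik, hc⟩
        simp [hik, hM, alphaAdj, Matrix.add_apply, Matrix.smul_apply,
          Matrix.one_apply_ne hik, hne]
    have hqx : x ⬝ᵥ (M *ᵥ x) = μ * (t : ℝ) := by
      have : x ⬝ᵥ (M *ᵥ x) = ∑ i ∈ S, ∑ k ∈ S, M i k := by
        simp only [dotProduct, mulVec, dotProduct, hx, ite_mul, one_mul, zero_mul, mul_ite,
          mul_one, mul_zero]
        rw [Finset.sum_ite_mem, Finset.univ_inter]
        refine Finset.sum_congr rfl fun i hi => ?_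
        rw [Finset.sum_ite_mem, Finset.univ_inter]
      rw [this, ← hcard]
      calc ∑ i ∈ S, ∑ k ∈ S, M i k = ∑ i ∈ S, μ := by
            refine Finset.sum_congr rfl fun i hi => ?_
            rw [Finset.sum_congr rfl (fun k hk => hM0 i hi k hk)]
            simp [hi]
        _ = μ * (S.card : ℝ) := by simp [mul_comm]
    have hxMw : x ⬝ᵥ (M *ᵥ w) = (t : ℝ) := by rw [hw]; exact hxj
    have hwMx : w ⬝ᵥ (M *ᵥ x) = (t : ℝ) := by
      rw [hMdot w x, hw, dotProduct_comm]; exact hxj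
    have hexp := hq (x - μ • w)
    simp only [mulVec_sub, mulVec_smul, sub_dotProduct, dotProduct_sub, smul_dotProduct,
      dotProduct_smul, smul_eq_mul] at hexp
    rw [hqx, hxMw, hwMx, hqw] at hexp
    rw [hs]
    nlinarith
  · -- upper bound
    rw [hs, hμ]
    rw [div_mul_eq_mul_div, div_le_div_iff₀ hab (neg_pos.2 hβ₀)]
    rcases eq_or_lt_of_le hs0 with h | h
    · rw [← h]
      nlinarith
    · have h2 : (-β) * s ≤ α - β := by
        refine le_of_mul_le_mul_right ?_ h
        nlinarith [key2]
      nlinarith [mul_le_mul_of_nonneg_left h2 h1β.le]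
end
end

section
/- Let -1 ≤ β < α < 1 with α > 0, and set λ = (1-α)/(α-β). Let G be an n-vertex graph with adjacency matrix A, and suppose one of the following holds for a positive integer r: (1) λI - A is positive definite and r = n; (2) λI - A is positive semidefinite and singular and r = rank(λI - A) + 1; (3) λI - A has exactly one negative eigenvalue, the all-ones vector j lies in the column space of λI - A, jᵀNj ≤ (α-β)/(-α) for every {1}-inverse N of λI - A, and r = rank(λI - A) - 1 if jᵀNj = (α-β)/(-α) while r = rank(λI - A) otherwise. Then there exists a spherical {α,β}-code S in ℝ^r of size n and rank r whose associated β-graph is G; that is, there are unit vectors u₁,…,uₙ in ℝ^r such that for all i ≠ j, uᵢ·uⱼ = β if vertices i and j are adjacent in G and uᵢ·uⱼ = α otherwise. -/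
open Matrix

noncomputable section

/-- Adjacency matrix of the associated `β`-graph `Γ_β(S)`. -/
def betaAdj (β : ℝ) {d n : ℕ} (u : Fin n → EuclideanSpace ℝ (Fin d)) :
    Matrix (Fin n) (Fin n) ℝ :=
  Matrix.of fun i j => if i ≠ j ∧ rinner (u i) (u j) = β then 1 else 0

section Aux

variable {n : ℕ}

lemma quadform_eig (M : Matrix (Fin n) (Fin n) ℝ) (hherm : M.IsHermitian)
    (a b : Fin n → ℝ) :
    a ⬝ᵥ (M *ᵥ b) = ∑ k, hherm.eigenvalues k *
      ((star (hherm.eigenvectorUnitary : Matrix (Fin n) (Fin n) ℝ) *ᵥ a) k) *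
      ((star (hherm.eigenvectorUnitary : Matrix (Fin n) (Fin n) ℝ) *ᵥ b) k) := by
  set V : Matrix (Fin n) (Fin n) ℝ := (hherm.eigenvectorUnitary : Matrix (Fin n) (Fin n) ℝ)
  have hstar : star V = Vᵀ := by
    rw [Matrix.star_eq_conjTranspose, Matrix.conjTranspose_eq_transpose_of_trivial]
  have hof : (RCLike.ofReal ∘ hherm.eigenvalues : Fin n → ℝ) = hherm.eigenvalues := by
    ext k; simp
  conv_lhs => rw [hherm.spectral_theorem, Unitary.conjStarAlgAut_apply]
  rw [hof, hstar, ← Matrix.mulVec_mulVec, ← Matrix.mulVec_mulVec,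
    Matrix.dotProduct_mulVec, ← Matrix.mulVec_transpose]
  simp only [Matrix.mulVec_diagonal, dotProduct]
  exact Finset.sum_congr rfl fun k _ => by ring

lemma sum_quad_ineq (μ a b : Fin n → ℝ)
    (hc : (Finset.univ.filter fun i => μ i < 0).card ≤ 1)
    (hA : (∑ i, μ i * a i * a i) < 0) :
    (∑ i, μ i * a i * a i) * (∑ i, μ i * b i * b i) ≤ (∑ i, μ i * a i * b i)^2 := by
  set A := ∑ i, μ i * a i * a i with hAdef
  set B := ∑ i, μ i * a i * b i with hBdef
  set C := ∑ i, μ i * b i * b i with hCdef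
  by_contra hlt
  push_neg at hlt
  obtain ⟨i₀, hi₀⟩ : ∃ i, μ i < 0 := by
    by_contra hno
    push_neg at hno
    exact absurd (Finset.sum_nonneg fun i _ => by
      nlinarith [hno i, mul_self_nonneg (a i)]) (not_le.mpr hA)
  have huniq : ∀ i, μ i < 0 → i = i₀ := by
    intro i hi
    exact Finset.card_le_one.mp hc i (by simp [hi]) i₀ (by simp [hi₀])
  have hnonneg : ∀ i, i ≠ i₀ → 0 ≤ μ i := by
    intro i hi
    by_contra hneg
    exact hi (huniq i (not_le.mp hneg))
  set p := a i₀ with hp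
  set q := b i₀ with hq
  have hpq : ¬ (p = 0 ∧ q = 0) := by
    rintro ⟨hp0, hq0⟩
    have : 0 ≤ A := Finset.sum_nonneg fun i _ => by
      rcases eq_or_ne i i₀ with rfl | hne
      · rw [← hp, hp0]; ring_nf; exact le_refl 0
      · nlinarith [hnonneg i hne, mul_self_nonneg (a i)]
    exact absurd this (not_le.mpr hA)
  set s := q with hs
  set t := -p with ht
  set c : Fin n → ℝ := fun i => s * a i + t * b i with hcdef
  have hci₀ : c i₀ = 0 := by simp [hcdef, hs, ht, hp, hq]; ring
  have hg : 0 ≤ ∑ i, μ i * c i * c i := by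
    apply Finset.sum_nonneg
    intro i _
    rcases eq_or_ne i i₀ with rfl | hne
    · rw [hci₀]; ring_nf; exact le_refl 0
    · nlinarith [hnonneg i hne, mul_self_nonneg (c i)]
  have hgid : (∑ i, μ i * c i * c i) = s^2*A + 2*s*t*B + t^2*C := by
    rw [hAdef, hBdef, hCdef, Finset.mul_sum, Finset.mul_sum, Finset.mul_sum,
      ← Finset.sum_add_distrib, ← Finset.sum_add_distrib]
    exact Finset.sum_congr rfl fun i _ => by simp [hcdef]; ring
  set g := ∑ i, μ i * c i * c i
  have hkey : A * g = (s*A + t*B)^2 + t^2*(A*C - B^2) := by rw [hgid]; ring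
  rcases eq_or_ne t 0 with ht0 | htne
  · have hs0 : s ≠ 0 := by
      intro hs0
      exact hpq ⟨by simpa [ht0] using (neg_eq_zero.mp (ht ▸ ht0 : -p = 0)), hs ▸ hs0⟩
    have hgs : g = s^2 * A := by rw [hgid, ht0]; ring
    have hs2 : 0 < s^2 := by positivity
    nlinarith [mul_neg_of_pos_of_neg hs2 hA]
  · have ht2 : 0 < t^2 := by positivity
    nlinarith [sq_nonneg (s*A + t*B), mul_pos ht2 (sub_pos.mpr hlt),
      mul_nonneg hg (neg_pos.mpr hA).le]

lemma quad_le (M : Matrix (Fin n) (Fin n) ℝ) (hherm : M.IsHermitian)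
    (hc : (Finset.univ.filter fun i => hherm.eigenvalues i < 0).card ≤ 1)
    (x y : Fin n → ℝ) (hx : x ⬝ᵥ (M *ᵥ x) < 0) :
    (x ⬝ᵥ (M *ᵥ x)) * (y ⬝ᵥ (M *ᵥ y)) ≤ (x ⬝ᵥ (M *ᵥ y))^2 := by
  rw [quadform_eig M hherm x x, quadform_eig M hherm x y, quadform_eig M hherm y y]
  rw [quadform_eig M hherm x x] at hx
  exact sum_quad_ineq _ _ _ hc hx

lemma exists_oneInv (M : Matrix (Fin n) (Fin n) ℝ) (hherm : M.IsHermitian) :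
    ∃ N : Matrix (Fin n) (Fin n) ℝ, M * N * M = M ∧ Nᵀ = N := by
  set V : Matrix (Fin n) (Fin n) ℝ := (hherm.eigenvectorUnitary : Matrix (Fin n) (Fin n) ℝ) with hV
  have hstar : star V = Vᵀ := by
    rw [Matrix.star_eq_conjTranspose, Matrix.conjTranspose_eq_transpose_of_trivial]
  have hof : (RCLike.ofReal ∘ hherm.eigenvalues : Fin n → ℝ) = hherm.eigenvalues := by
    ext k; simp
  have hVV : Vᵀ * V = 1 := by
    rw [← hstar]; exact (Unitary.coe_star_mul_self hherm.eigenvectorUnitary)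
  set μ := hherm.eigenvalues
  refine ⟨V * diagonal (fun i => (μ i)⁻¹) * Vᵀ, ?_, ?_⟩
  · have hspec : M = V * diagonal μ * Vᵀ := by
      conv_lhs => rw [hherm.spectral_theorem, Unitary.conjStarAlgAut_apply]
      rw [hof, hstar]
    have hmul : ∀ (d e : Fin n → ℝ), (V * diagonal d * Vᵀ) * (V * diagonal e * Vᵀ)
        = V * diagonal (d * e) * Vᵀ := by
      intro d e
      calc (V * diagonal d * Vᵀ) * (V * diagonal e * Vᵀ)
          = V * diagonal d * (Vᵀ * V) * (diagonal e * Vᵀ) := by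
            simp only [Matrix.mul_assoc]
        _ = V * (diagonal d * diagonal e) * Vᵀ := by
            rw [hVV, Matrix.mul_one]; simp only [Matrix.mul_assoc]
        _ = V * diagonal (d * e) * Vᵀ := by rw [Matrix.diagonal_mul_diagonal]; rfl
    have hfun : ((μ * fun i => (μ i)⁻¹) * μ) = μ := by
      ext i
      rcases eq_or_ne (μ i) 0 with h | h
      · simp [h]
      · simp only [Pi.mul_apply]; field_simp
    rw [hspec, hmul, hmul, hfun]
  · rw [Matrix.transpose_mul, Matrix.transpose_mul, Matrix.transpose_transpose,
      Matrix.diagonal_transpose, Matrix.mul_assoc]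

lemma build {r : ℕ} (B : Matrix (Fin n) (Fin n) ℝ) (hB : B.PosSemidef)
    (hrank : B.rank = r) :
    ∃ u : Fin n → EuclideanSpace ℝ (Fin r),
      (∀ i j, rinner (u i) (u j) = B i j) ∧
      Module.finrank ℝ (Submodule.span ℝ (Set.range u)) = r := by
  classical
  have hH : B.IsHermitian := hB.1
  set μ := hH.eigenvalues with hμ
  set V : Matrix (Fin n) (Fin n) ℝ := (hH.eigenvectorUnitary : Matrix (Fin n) (Fin n) ℝ) with hV
  have hμ0 : ∀ i, 0 ≤ μ i := hB.eigenvalues_nonneg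
  have hcard : Fintype.card {i // μ i ≠ 0} = r := by
    rw [← hH.rank_eq_card_non_zero_eigs]; exact hrank
  set e : Fin r ≃ {i // μ i ≠ 0} := (Fintype.equivFinOfCardEq hcard).symm with he
  set W : Matrix (Fin n) (Fin r) ℝ :=
    Matrix.of (fun i k => Real.sqrt (μ (e k)) * V i (e k)) with hW
  have hBij : ∀ i j, B i j = ∑ s, μ s * (V i s * V j s) := by
    intro i j
    have hof : (RCLike.ofReal ∘ μ : Fin n → ℝ) = μ := by ext k; simp
    have hstar : star V = Vᵀ := by
      rw [Matrix.star_eq_conjTranspose, Matrix.conjTranspose_eq_transpose_of_trivial]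
    conv_lhs => rw [hH.spectral_theorem, Unitary.conjStarAlgAut_apply]
    rw [hof, hstar]
    simp only [Matrix.mul_apply, Matrix.mul_diagonal, Matrix.diagonal_apply,
      Matrix.transpose_apply, mul_ite, mul_zero, Finset.sum_ite_eq, Finset.sum_ite_eq',
      Finset.mem_univ, if_true]
    exact Finset.sum_congr rfl fun s _ => by ring
  have hGram : W * Wᵀ = B := by
    ext i j
    rw [hBij i j]
    simp only [Matrix.mul_apply, Matrix.transpose_apply, hW, Matrix.of_apply]
    have hterm : ∀ k : Fin r, Real.sqrt (μ (e k)) * V i (e k) * (Real.sqrt (μ (e k)) * V j (e k))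
        = μ ((e k) : Fin n) * (V i (e k) * V j (e k)) := by
      intro k
      rw [mul_mul_mul_comm, Real.mul_self_sqrt (hμ0 (e k))]
    rw [Finset.sum_congr rfl fun k _ => hterm k]
    calc ∑ k : Fin r, μ ((e k) : Fin n) * (V i (e k) * V j (e k))
        = ∑ s : {i // μ i ≠ 0}, μ (s : Fin n) * (V i s * V j s) :=
          Fintype.sum_equiv e _ _ (fun k => rfl)
      _ = ∑ s ∈ Finset.univ.filter (fun s => μ s ≠ 0), μ s * (V i s * V j s) :=
          (Finset.sum_subtype (Finset.univ.filter fun s => μ s ≠ 0) (fun x => by simp)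
            (fun s => μ s * (V i s * V j s))).symm
      _ = ∑ s, μ s * (V i s * V j s) := by
          apply Finset.sum_subset (Finset.filter_subset _ _)
          intro x _ hx
          simp only [Finset.mem_filter, Finset.mem_univ, true_and, not_not] at hx
          simp [hx]
  set u : Fin n → EuclideanSpace ℝ (Fin r) :=
    fun i => (WithLp.equiv 2 (Fin r → ℝ)).symm (W i) with hu
  refine ⟨u, ?_, ?_⟩
  · intro i j
    have : rinner (u i) (u j) = ∑ k, W i k * W j k := by
      simp [rinner, hu, PiLp.inner_apply, RCLike.inner_apply]
      exact Finset.sum_congr rfl fun k _ => mul_comm _ _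
    rw [this, ← hGram]
    simp [Matrix.mul_apply]
  · have hrW : W.rank = r := by
      have h2 := Matrix.rank_self_mul_transpose W
      rw [hGram] at h2
      rw [← h2, hrank]
    have hspanrow : W.rank = Module.finrank ℝ (Submodule.span ℝ (Set.range W)) :=
      Matrix.rank_eq_finrank_span_row W
    have himg : Set.range u = (WithLp.linearEquiv 2 ℝ (Fin r → ℝ)).symm '' (Set.range W) := by
      exact Set.range_comp _ _
    rw [himg]; erw [← Submodule.map_span]
    erw [LinearEquiv.finrank_map_eq]
    rw [← hspanrow, hrW]

lemma rank_add_ker (A : Matrix (Fin n) (Fin n) ℝ) :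
    A.rank + Module.finrank ℝ (LinearMap.ker A.mulVecLin) = n := by
  have := LinearMap.finrank_range_add_finrank_ker A.mulVecLin
  rwa [Module.finrank_fintype_fun_eq_card, Fintype.card_fin] at this

lemma finrank_inf_ker {E : Type*} [AddCommGroup E] [Module ℝ E] [FiniteDimensional ℝ E]
    (K : Submodule ℝ E) (φ : E →ₗ[ℝ] ℝ) {w : E} (hw : w ∈ K) (hφ : φ w ≠ 0) :
    Module.finrank ℝ (K ⊓ LinearMap.ker φ : Submodule ℝ E) + 1 = Module.finrank ℝ K := by
  set ψ : K →ₗ[ℝ] ℝ := φ.comp K.subtype with hψ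
  have hrange : LinearMap.range ψ = ⊤ := by
    rw [eq_top_iff]
    rintro c -
    refine ⟨(c / φ w) • ⟨w, hw⟩, ?_⟩
    simp [hψ]
    field_simp
  have hrn := LinearMap.finrank_range_add_finrank_ker ψ
  rw [hrange, finrank_top] at hrn
  have hker : (LinearMap.ker ψ).map K.subtype = K ⊓ LinearMap.ker φ := by
    have : LinearMap.ker ψ = Submodule.comap K.subtype (LinearMap.ker φ) := by
      ext z; simp [hψ]
    rw [this, Submodule.map_comap_subtype]
  have hfm := Submodule.finrank_map_subtype_eq K (LinearMap.ker ψ)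
  rw [hker] at hfm
  rw [hfm]
  rw [Module.finrank_self] at hrn
  omega

lemma psd_smul {A : Matrix (Fin n) (Fin n) ℝ} (hA : A.PosSemidef) {c : ℝ} (hc : 0 ≤ c) :
    (c • A).PosSemidef := by
  refine Matrix.PosSemidef.of_dotProduct_mulVec_nonneg ?_ ?_
  · unfold Matrix.IsHermitian
    rw [Matrix.conjTranspose_smul, hA.1]
    congr 1
  · intro x
    rw [Matrix.smul_mulVec, dotProduct_smul]
    exact mul_nonneg hc (hA.dotProduct_mulVec_nonneg x)

end Aux
set_option maxHeartbeats 1000000 in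
/-- converse construction for `{α,β}`-codes with `α > 0` from the
`β`-graph. If an `n`-vertex graph `G` (with `M = λI - A`, `λ = (1-α)/(α-β)`) satisfies
one of the three spectral conditions of Theorem 4.2 for a positive integer `r`, then
there is a spherical `{α,β}`-code of size `n` and rank `r` in `ℝ^r` whose associated
`β`-graph is `G`. -/
theorem stmt12 (n : ℕ)
    (α β lam : ℝ) (hβ₁ : -1 ≤ β) (hβα : β < α) (hα : α < 1) (hα₀ : 0 < α)
    (hlam : lam = (1 - α) / (α - β))
    (G : SimpleGraph (Fin n)) [DecidableRel G.Adj]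
    (M : Matrix (Fin n) (Fin n) ℝ)
    (hM : M = lam • (1 : Matrix (Fin n) (Fin n) ℝ) - G.adjMatrix ℝ)
    (hherm : M.IsHermitian)
    (r : ℕ) (hr : 0 < r)
    (hcase :
      (M.PosDef ∧ r = n) ∨
      (M.PosSemidef ∧ M.det = 0 ∧ r = M.rank + 1) ∨
      ((Finset.univ.filter fun i => hherm.eigenvalues i < 0).card = 1 ∧
        (∃ x : Fin n → ℝ, M *ᵥ x = fun _ => 1) ∧
        (∀ N : Matrix (Fin n) (Fin n) ℝ, M * N * M = M →
          (fun _ => (1 : ℝ)) ⬝ᵥ (N *ᵥ fun _ => 1) ≤ (α - β) / (-α)) ∧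
        (∀ N : Matrix (Fin n) (Fin n) ℝ, M * N * M = M →
          (r : ℤ) = if (fun _ => (1 : ℝ)) ⬝ᵥ (N *ᵥ fun _ => 1) = (α - β) / (-α)
            then (M.rank : ℤ) - 1 else (M.rank : ℤ)))) :
    ∃ u : Fin n → EuclideanSpace ℝ (Fin r),
      (∀ i, ‖u i‖ = 1) ∧
      Module.finrank ℝ (Submodule.span ℝ (Set.range u)) = r ∧
      ∀ i j, i ≠ j → rinner (u i) (u j) = if G.Adj i j then β else α := by
  classical
  have hab : (0:ℝ) < α - β := sub_pos.mpr hβα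
  set j : Fin n → ℝ := fun _ => (1:ℝ) with hj
  set J : Matrix (Fin n) (Fin n) ℝ := Matrix.of (fun _ _ => (1:ℝ)) with hJ
  set Gm : Matrix (Fin n) (Fin n) ℝ := (α - β) • M + α • J with hGm
  have hsymm : Mᵀ = M := by
    have h : M.IsSymm := by simpa [Matrix.conjTranspose_eq_transpose_of_trivial] using hherm
    exact h
  have hJmulVec : ∀ y : Fin n → ℝ, J *ᵥ y = fun _ => j ⬝ᵥ y := by
    intro y; funext i
    simp [hJ, Matrix.mulVec, dotProduct, hj]
  have hGmulVec : ∀ y : Fin n → ℝ, Gm *ᵥ y = (α - β) • (M *ᵥ y) + (α * (j ⬝ᵥ y)) • j := by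
    intro y
    rw [hGm, Matrix.add_mulVec, Matrix.smul_mulVec, Matrix.smul_mulVec, hJmulVec y]
    congr 1
    funext i
    simp [hj, mul_comm]
  have hdotj : ∀ (y : Fin n → ℝ) (c : ℝ), y ⬝ᵥ (c • j) = c * (j ⬝ᵥ y) := by
    intro y c
    simp [dotProduct, hj, Finset.mul_sum]
    ring_nf
    exact Finset.sum_congr rfl fun i _ => by ring
  have hdotG : ∀ y : Fin n → ℝ, y ⬝ᵥ (Gm *ᵥ y)
      = (α - β) * (y ⬝ᵥ (M *ᵥ y)) + α * (j ⬝ᵥ y)^2 := by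
    intro y
    rw [hGmulVec y, dotProduct_add, dotProduct_smul, hdotj]
    simp only [smul_eq_mul]
    ring
  have hMdot : ∀ a b : Fin n → ℝ, a ⬝ᵥ (M *ᵥ b) = (M *ᵥ a) ⬝ᵥ b := by
    intro a b
    rw [Matrix.dotProduct_mulVec, ← Matrix.mulVec_transpose, hsymm]
  have hJherm : J.IsHermitian := by
    unfold Matrix.IsHermitian
    ext i k
    simp [hJ]
  have hJpsd : J.PosSemidef := by
    refine Matrix.PosSemidef.of_dotProduct_mulVec_nonneg hJherm fun y => ?_
    have hsy : star y = y := funext fun i => star_trivial _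
    rw [hsy]
    have : J *ᵥ y = (j ⬝ᵥ y) • j := by
      rw [hJmulVec y]; funext i; simp [hj]
    rw [this, hdotj]
    exact mul_self_nonneg _
  have hsmulherm : ∀ (c : ℝ) (A : Matrix (Fin n) (Fin n) ℝ), A.IsHermitian →
      (c • A).IsHermitian := by
    intro c A hA
    unfold Matrix.IsHermitian at *
    rw [Matrix.conjTranspose_smul, hA]
    congr 1
  have hGherm : Gm.IsHermitian :=
    Matrix.IsHermitian.add (hsmulherm _ _ hherm) (hsmulherm _ _ hJherm)
  -- entries of Gm
  have hablam : (α - β) * lam = 1 - α := by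
    rw [hlam]; field_simp
  have hGii : ∀ i, Gm i i = 1 := by
    intro i
    simp [hGm, hM, hJ, Matrix.one_apply, Matrix.smul_apply, Matrix.sub_apply]
    nlinarith [hablam]
  have hGij : ∀ i k, i ≠ k → Gm i k = if G.Adj i k then β else α := by
    intro i k hne
    simp [hGm, hM, hJ, Matrix.one_apply, Matrix.smul_apply, Matrix.sub_apply, hne]
    rcases em (G.Adj i k) with h | h <;> simp [h] <;> ring
  -- the main reduction
  suffices h : Gm.PosSemidef ∧ Gm.rank = r by
    obtain ⟨u, hinner, hspan⟩ := build Gm h.1 h.2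
    refine ⟨u, ?_, hspan, ?_⟩
    · intro i
      have h1 : rinner (u i) (u i) = 1 := by rw [hinner, hGii]
      have h2 : rinner (u i) (u i) = ‖u i‖^2 := real_inner_self_eq_norm_sq _
      nlinarith [norm_nonneg (u i), h1, h2.symm.trans h1]
    · intro i k hne
      rw [hinner, hGij i k hne]
  -- the linear functional y ↦ j ⬝ᵥ y
  set φ : (Fin n → ℝ) →ₗ[ℝ] ℝ :=
    { toFun := fun y => j ⬝ᵥ y
      map_add' := fun a b => by simp [dotProduct_add]
      map_smul' := fun c a => by simp [dotProduct_smul] } with hφ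
  rcases hcase with ⟨hpd, hrn⟩ | ⟨hpsd, hdet, hrk⟩ | ⟨hcard1, ⟨x, hx⟩, hub, hrdef⟩
  · -- Case 1 : M positive definite
    have hGpd : Gm.PosDef := by
      rw [hGm]
      have hpd' : ((α - β) • M).PosDef := by
        refine Matrix.PosDef.of_dotProduct_mulVec_pos (hsmulherm _ _ hpd.1) fun z hz => ?_
        rw [Matrix.smul_mulVec, dotProduct_smul, smul_eq_mul]
        exact mul_pos hab (hpd.dotProduct_mulVec_pos hz)
      exact Matrix.PosDef.add_posSemidef hpd' (psd_smul hJpsd hα₀.le)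
    constructor
    · exact hGpd.posSemidef
    · have : IsUnit Gm := by
        rw [Matrix.isUnit_iff_isUnit_det]
        exact isUnit_iff_ne_zero.mpr hGpd.det_pos.ne'
      rw [Matrix.rank_of_isUnit Gm this, Fintype.card_fin, hrn]
  · -- Case 2 : M positive semidefinite and singular
    have hGpsd : Gm.PosSemidef := (psd_smul hpsd hab.le).add (psd_smul hJpsd hα₀.le)
    obtain ⟨v, hv0, hvker⟩ := Matrix.exists_mulVec_eq_zero_iff.mpr hdet
    set w : Fin n → ℝ := fun i => |v i| with hw
    have hsw : star w = w := funext fun i => star_trivial _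
    have hwM : w ⬝ᵥ (M *ᵥ w) ≤ 0 := by
      have hdouble : ∀ (A : Matrix (Fin n) (Fin n) ℝ) (z : Fin n → ℝ),
          z ⬝ᵥ (A *ᵥ z) = ∑ i, ∑ k, A i k * (z i * z k) := by
        intro A z
        simp only [dotProduct, Matrix.mulVec, Finset.mul_sum]
        exact Finset.sum_congr rfl fun i _ => Finset.sum_congr rfl fun k _ => by ring
      have hexp : ∀ z : Fin n → ℝ, z ⬝ᵥ (M *ᵥ z)
          = lam * (z ⬝ᵥ z) - ∑ i, ∑ k, (G.adjMatrix ℝ) i k * (z i * z k) := by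
        intro z
        rw [hM, Matrix.sub_mulVec, Matrix.smul_mulVec, Matrix.one_mulVec,
          dotProduct_sub, dotProduct_smul, smul_eq_mul, hdouble]
      have hww : w ⬝ᵥ w = v ⬝ᵥ v := by
        simp only [dotProduct, hw]
        exact Finset.sum_congr rfl fun i _ => abs_mul_abs_self _
      have hsum : ∀ i k, (G.adjMatrix ℝ) i k * (v i * v k) ≤ (G.adjMatrix ℝ) i k * (w i * w k) := by
        intro i k
        apply mul_le_mul_of_nonneg_left _
          (by by_cases h : G.Adj i k <;> simp [h])
        rw [hw]
        calc v i * v k ≤ |v i * v k| := le_abs_self _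
          _ = |v i| * |v k| := abs_mul _ _
      have h1 : v ⬝ᵥ (M *ᵥ v) = 0 := by rw [hvker, dotProduct_zero]
      rw [hexp w]
      rw [hexp v] at h1
      have h2 : ∑ i, ∑ k, (G.adjMatrix ℝ) i k * (v i * v k)
          ≤ ∑ i, ∑ k, (G.adjMatrix ℝ) i k * (w i * w k) :=
        Finset.sum_le_sum fun i _ => Finset.sum_le_sum fun k _ => hsum i k
      rw [hww]
      linarith
    have hwker : M *ᵥ w = 0 := by
      have := hpsd.dotProduct_mulVec_nonneg w
      rw [hsw] at this
      have h0 : w ⬝ᵥ (M *ᵥ w) = 0 := le_antisymm hwM this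
      have := (hpsd.dotProduct_mulVec_zero_iff w).mp (by rw [hsw]; exact h0)
      exact this
    have hjw : 0 < j ⬝ᵥ w := by
      simp only [dotProduct, hj, one_mul, hw]
      obtain ⟨i, hi⟩ := Function.ne_iff.mp hv0
      exact Finset.sum_pos' (fun k _ => abs_nonneg _)
        ⟨i, Finset.mem_univ i, abs_pos.mpr hi⟩
    -- kernel of Gm
    have hkerG : LinearMap.ker Gm.mulVecLin
        = LinearMap.ker M.mulVecLin ⊓ LinearMap.ker φ := by
      ext y
      simp only [LinearMap.mem_ker, Submodule.mem_inf, Matrix.mulVecLin_apply]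
      constructor
      · intro hy
        have hq : (α - β) * (y ⬝ᵥ (M *ᵥ y)) + α * (j ⬝ᵥ y)^2 = 0 := by
          rw [← hdotG y, hy, dotProduct_zero]
        have hsy : star y = y := funext fun i => star_trivial _
        have hy1 : 0 ≤ y ⬝ᵥ (M *ᵥ y) := by
          have := hpsd.dotProduct_mulVec_nonneg y
          rwa [hsy] at this
        have hy2 : 0 ≤ (j ⬝ᵥ y)^2 := sq_nonneg _
        have hMy0 : y ⬝ᵥ (M *ᵥ y) = 0 := by nlinarith
        have hjy0 : (j ⬝ᵥ y) = 0 := by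
          have hs2 : (j ⬝ᵥ y)^2 = 0 := by nlinarith
          exact sq_eq_zero_iff.mp hs2
        refine ⟨?_, by simpa [hφ] using hjy0⟩
        exact (hpsd.dotProduct_mulVec_zero_iff y).mp (by rw [hsy]; exact hMy0)
      · rintro ⟨h1, h2⟩
        have h2' : j ⬝ᵥ y = 0 := by simpa [hφ] using h2
        rw [hGmulVec y, h1, h2']
        simp
    constructor
    · exact hGpsd
    · have hwmem : w ∈ LinearMap.ker M.mulVecLin := by
        simpa [LinearMap.mem_ker, Matrix.mulVecLin_apply] using hwker
      have hφw : φ w ≠ 0 := by simpa [hφ] using hjw.ne'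
      have hdim := finrank_inf_ker (LinearMap.ker M.mulVecLin) φ hwmem hφw
      have e1 := rank_add_ker Gm
      have e2 := rank_add_ker M
      rw [hkerG] at e1
      omega
  · -- Case 3 : one negative eigenvalue
    obtain ⟨N₀, hN₀, hN₀T⟩ := exists_oneInv M hherm
    set t : ℝ := j ⬝ᵥ x with htdef
    have hxj : M *ᵥ x = j := hx
    have hjNj : j ⬝ᵥ (N₀ *ᵥ j) = t := by
      conv_lhs => rw [← hxj]
      rw [Matrix.mulVec_mulVec, Matrix.dotProduct_mulVec, ← Matrix.mulVec_transpose,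
        Matrix.transpose_mul, hsymm, hN₀T, Matrix.mulVec_mulVec, hN₀, hxj]
    have hthr_neg : (α - β) / (-α) < 0 := div_neg_of_pos_of_neg hab (by linarith)
    have htle : t ≤ (α - β) / (-α) := by rw [← hjNj]; exact hub N₀ hN₀
    have ht0 : t < 0 := lt_of_le_of_lt htle hthr_neg
    have hxMx : x ⬝ᵥ (M *ᵥ x) = t := by rw [hMdot x x, hxj]
    have hMxs : ∀ y, x ⬝ᵥ (M *ᵥ y) = j ⬝ᵥ y := fun y => by rw [hMdot x y, hxj]
    have hquad : ∀ y, t * (y ⬝ᵥ (M *ᵥ y)) ≤ (j ⬝ᵥ y)^2 := by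
      intro y
      have h := quad_le M hherm (le_of_eq hcard1) x y (by rw [hxMx]; exact ht0)
      rw [hxMx, hMxs y] at h
      exact h
    have hαt : α - β ≤ t * (-α) := (le_div_iff_of_neg (by linarith : -α < 0)).mp htle
    have hGpsd : Gm.PosSemidef := by
      refine Matrix.PosSemidef.of_dotProduct_mulVec_nonneg hGherm fun y => ?_
      have hsy : star y = y := funext fun i => star_trivial _
      rw [hsy, hdotG y]
      nlinarith [hquad y, sq_nonneg (j ⬝ᵥ y),
        mul_nonneg (sub_nonneg.mpr (hquad y)) hab.le,
        mul_nonneg (sub_nonneg.mpr hαt) (sq_nonneg (j ⬝ᵥ y)), ht0, hα₀]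
    have hiff : (t = (α - β) / (-α)) ↔ (α - β) + α * t = 0 := by
      rw [eq_div_iff (by linarith : (-α) ≠ 0)]
      constructor <;> intro h <;> linarith
    have hrval := hrdef N₀ hN₀
    rw [hjNj] at hrval
    have hkerM_sub : ∀ y, M *ᵥ y = 0 → Gm *ᵥ y = 0 := by
      intro y hy
      have hs : j ⬝ᵥ y = 0 := by rw [← hMxs y, hy, dotProduct_zero]
      rw [hGmulVec y, hy, hs]
      simp
    have hxnker : M *ᵥ x ≠ 0 := by
      rw [hxj]
      intro h0
      have : t = 0 := by rw [htdef, h0, zero_dotProduct]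
      linarith
    have hxnkerM : x ∉ LinearMap.ker M.mulVecLin := by
      simpa [LinearMap.mem_ker, Matrix.mulVecLin_apply] using hxnker
    by_cases hteq : t = (α - β) / (-α)
    · -- equality threshold case : rank drops by one
      rw [if_pos hteq] at hrval
      have hkap : (α - β) + α * t = 0 := hiff.mp hteq
      have hMrank : M.rank = r + 1 := by omega
      have hkerG : LinearMap.ker Gm.mulVecLin
          = LinearMap.ker M.mulVecLin ⊔ Submodule.span ℝ {x} := by
        apply le_antisymm
        · intro y hy
          rw [LinearMap.mem_ker, Matrix.mulVecLin_apply] at hy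
          have hz : M *ᵥ ((α - β) • y + (α * (j ⬝ᵥ y)) • x) = 0 := by
            rw [Matrix.mulVec_add, Matrix.mulVec_smul, Matrix.mulVec_smul, hxj]
            have h := hGmulVec y
            rw [hy] at h
            exact h.symm
          have hzmem : ((α - β) • y + (α * (j ⬝ᵥ y)) • x) ∈ LinearMap.ker M.mulVecLin := by
            simpa [LinearMap.mem_ker, Matrix.mulVecLin_apply] using hz
          have hymem : y = (α - β)⁻¹ • ((α - β) • y + (α * (j ⬝ᵥ y)) • x)
              + (-(α * (j ⬝ᵥ y))/(α - β)) • x := by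
            rw [smul_add, smul_smul, smul_smul, inv_mul_cancel₀ hab.ne', one_smul, add_assoc,
              ← add_smul]
            have hc0 : (α - β)⁻¹ * (α * (j ⬝ᵥ y)) + -(α * (j ⬝ᵥ y))/(α - β) = 0 := by
              field_simp; ring
            rw [hc0, zero_smul, add_zero]
          rw [hymem]
          refine Submodule.add_mem _ (Submodule.smul_mem _ _ (Submodule.mem_sup_left hzmem))
            (Submodule.smul_mem _ _ (Submodule.mem_sup_right
              (Submodule.subset_span (Set.mem_singleton x))))
        · rw [sup_le_iff]
          constructor
          · intro y hy
            rw [LinearMap.mem_ker, Matrix.mulVecLin_apply] at hy ⊢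
            exact hkerM_sub y hy
          · rw [Submodule.span_le, Set.singleton_subset_iff, SetLike.mem_coe,
              LinearMap.mem_ker, Matrix.mulVecLin_apply, hGmulVec x, hxj, ← htdef, ← add_smul,
              hkap, zero_smul]
      have hinf : LinearMap.ker M.mulVecLin ⊓ Submodule.span ℝ {x} = ⊥ := by
        rw [eq_bot_iff]
        rintro z hz
        rw [Submodule.mem_inf] at hz
        obtain ⟨hz1, hz2⟩ := hz
        obtain ⟨c, rfl⟩ := Submodule.mem_span_singleton.mp hz2
        rcases eq_or_ne c 0 with rfl | hc
        · simp
        · exfalso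
          apply hxnkerM
          have := (LinearMap.ker M.mulVecLin).smul_mem c⁻¹ hz1
          rwa [smul_smul, inv_mul_cancel₀ hc, one_smul] at this
      have hx0 : x ≠ 0 := by
        intro h
        apply hxnker
        rw [h, Matrix.mulVec_zero]
      have hsup := Submodule.finrank_sup_add_finrank_inf_eq
        (LinearMap.ker M.mulVecLin) (Submodule.span ℝ {x})
      rw [hinf, finrank_bot, finrank_span_singleton hx0] at hsup
      have e1 := rank_add_ker Gm
      have e2 := rank_add_ker M
      rw [hkerG] at e1
      exact ⟨hGpsd, by omega⟩
    · -- strict case : rank preserved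
      rw [if_neg hteq] at hrval
      have hMrank : M.rank = r := by exact_mod_cast hrval.symm
      have hkap : (α - β) + α * t ≠ 0 := fun h => hteq (hiff.mpr h)
      have hkerG : LinearMap.ker Gm.mulVecLin = LinearMap.ker M.mulVecLin := by
        apply le_antisymm
        · intro y hy
          rw [LinearMap.mem_ker, Matrix.mulVecLin_apply] at hy ⊢
          have e2 : x ⬝ᵥ (Gm *ᵥ y) = 0 := by rw [hy, dotProduct_zero]
          rw [hGmulVec y, dotProduct_add, dotProduct_smul, hMxs y, hdotj x,
            ← htdef] at e2
          have es : (j ⬝ᵥ y) * ((α - β) + α * t) = 0 := by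
            simp only [smul_eq_mul] at e2
            linarith [e2]
          have hs0 : j ⬝ᵥ y = 0 := by
            rcases mul_eq_zero.mp es with h | h
            · exact h
            · exact absurd h hkap
          have h := hGmulVec y
          rw [hy, hs0] at h
          have : (α - β) • (M *ᵥ y) = 0 := by
            rw [mul_zero, zero_smul, add_zero] at h
            exact h.symm
          rcases smul_eq_zero.mp this with h' | h'
          · exact absurd h' hab.ne'
          · exact h'
        · intro y hy
          rw [LinearMap.mem_ker, Matrix.mulVecLin_apply] at hy ⊢
          exact hkerM_sub y hy
      have e1 := rank_add_ker Gm
      have e2 := rank_add_ker M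
      rw [hkerG] at e1
      exact ⟨hGpsd, by omega⟩
end
end
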